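/- Let A_1, …, A_k ∈ M_n be nonzero positive semidefinite matrices that are pairwise orthogonal with respect to the trace inner product (tr(A_i* A_j) = 0 for i ≠ j), and let B_1, …, B_k ∈ M_n be positive semidefinite matrices. Then the following are equivalent: (a) tr(A_i) = tr(B_i) for every i ∈ {1, …, k}; (b) there exists a completely positive linear map φ : M_n → M_n such that φ(A_i) = B_i for every i and tr(φ(X)) = tr(X) for every X in the linear span of {A_1, …, A_k}. -/

import Mathlib

open Matrix
open scoped ComplexOrder Kronecker
open scoped ComplexConjugate

/-- The map `I_k ⊗ φ` acting on `k×k` block matrices with `n×n` blocks: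
the `((i,r),(j,s))` entry of the output is the `(r,s)` entry of `φ` applied to
the `(i,j)`-th block of `M`. -/
def blockMap {n : ℕ} (k : ℕ)
    (φ : Matrix (Fin n) (Fin n) ℂ → Matrix (Fin n) (Fin n) ℂ)
    (M : Matrix (Fin k × Fin n) (Fin k × Fin n) ℂ) :
    Matrix (Fin k × Fin n) (Fin k × Fin n) ℂ :=
  Matrix.of fun p q => φ (Matrix.of fun r s => M (p.1, r) (q.1, s)) p.2 q.2

/-- `φ : M_n → M_n` is completely positive if for every `k` the induced map on
`k×k` block matrices sends positive semidefinite matrices to positive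
semidefinite matrices. -/
def IsCompletelyPositive {n : ℕ}
    (φ : Matrix (Fin n) (Fin n) ℂ → Matrix (Fin n) (Fin n) ℂ) : Prop :=
  ∀ (k : ℕ) (M : Matrix (Fin k × Fin n) (Fin k × Fin n) ℂ),
    M.PosSemidef → (blockMap k φ M).PosSemidef

/-- `φ : M_n → M_n` is entanglement breaking if it admits a Kraus
representation `φ(X) = Σ_j V_j X V_j*` with every `V_j` of rank at most one. -/
def IsEntanglementBreaking {n : ℕ}
    (φ : Matrix (Fin n) (Fin n) ℂ → Matrix (Fin n) (Fin n) ℂ) : Prop :=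
  ∃ (m : ℕ) (V : Fin m → Matrix (Fin n) (Fin n) ℂ),
    (∀ j, (V j).rank ≤ 1) ∧ ∀ X, φ X = ∑ j, V j * X * (V j)ᴴ

/-- The Choi matrix of `φ : M_n → M_n`: the `n²×n²` block matrix whose
`(i,j)`-th `n×n` block is `φ (E i j)`. -/
def choiMatrix {n : ℕ}
    (φ : Matrix (Fin n) (Fin n) ℂ → Matrix (Fin n) (Fin n) ℂ) :
    Matrix (Fin n × Fin n) (Fin n × Fin n) ℂ :=
  Matrix.of fun p q => φ (Matrix.single p.1 q.1 1) p.2 q.2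

lemma posSemidef_sum {m ι : Type*} [Fintype m] (s : Finset ι)
    (f : ι → Matrix m m ℂ) (h : ∀ i ∈ s, (f i).PosSemidef) :
    (∑ i ∈ s, f i).PosSemidef := by
  classical
  induction s using Finset.induction_on with
  | empty => simpa using (Matrix.PosSemidef.zero (n := m) (R := ℂ))
  | insert _ _ hni ih =>
      rw [Finset.sum_insert hni]
      exact (h _ (Finset.mem_insert_self _ _)).add
        (ih fun i hi => h i (Finset.mem_insert_of_mem hi))

lemma blockMap_traceSmul_posSemidef {n : ℕ} {A B : Matrix (Fin n) (Fin n) ℂ}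
    (hA : A.PosSemidef) (hB : B.PosSemidef) (k : ℕ)
    (M : Matrix (Fin k × Fin n) (Fin k × Fin n) ℂ) (hM : M.PosSemidef) :
    (blockMap k (fun X => (A * X).trace • B) M).PosSemidef := by
  obtain ⟨C, hC⟩ : ∃ C : Matrix (Fin n) (Fin n) ℂ, A = Cᴴ * C := by
    open scoped MatrixOrder in exact CStarAlgebra.nonneg_iff_eq_star_mul_self.mp hA.nonneg
  obtain ⟨D, hD⟩ : ∃ D : Matrix (Fin n) (Fin n) ℂ, B = Dᴴ * D := by
    open scoped MatrixOrder in exact CStarAlgebra.nonneg_iff_eq_star_mul_self.mp hB.nonneg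
  set W : Fin n → Fin n → Matrix (Fin k × Fin n) (Fin k × Fin n) ℂ :=
    fun t u => Matrix.of fun p q =>
      (if p.1 = q.1 then (1:ℂ) else 0) * (conj (D u p.2) * C t q.2) with hW
  have key : blockMap k (fun X => (A * X).trace • B) M
      = ∑ t : Fin n, ∑ u : Fin n, W t u * M * (W t u)ᴴ := by
    ext ⟨p, r⟩ ⟨q, s⟩
    have hWM : ∀ t u : Fin n, (W t u * M * (W t u)ᴴ) (p,r) (q,s)
        = (conj (D u r) * D u s) *
          ∑ a : Fin n, ∑ b : Fin n, C t a * M (p,a) (q,b) * conj (C t b) := by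
      intro t u
      have h1 : ∀ y : Fin k × Fin n, (W t u * M) (p,r) y
          = conj (D u r) * ∑ a : Fin n, C t a * M (p,a) y := by
        intro y
        rw [Matrix.mul_apply, Fintype.sum_prod_type]
        have e1 : ∀ x1 : Fin k, (∑ x2 : Fin n, W t u (p,r) (x1,x2) * M (x1,x2) y)
            = if p = x1 then conj (D u r) * ∑ a : Fin n, C t a * M (x1,a) y else 0 := by
          intro x1
          by_cases h : p = x1 <;>
            simp [hW, h, Finset.mul_sum, mul_assoc]
        simp_rw [e1]
        simp
      rw [Matrix.mul_apply, Fintype.sum_prod_type]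
      have e2 : ∀ y1 : Fin k, (∑ y2 : Fin n, (W t u * M) (p,r) (y1,y2) * (W t u)ᴴ (y1,y2) (q,s))
          = if q = y1 then (conj (D u r) * D u s) *
              ∑ a : Fin n, ∑ b : Fin n, C t a * M (p,a) (y1,b) * conj (C t b) else 0 := by
        intro y1
        by_cases h : q = y1
        · subst h
          simp only [Matrix.conjTranspose_apply]
          simp_rw [h1]
          simp only [hW, Matrix.of_apply, if_pos rfl, one_mul, star_mul', starRingEnd_apply,
            star_star, if_true]
          simp only [Finset.mul_sum, Finset.sum_mul]
          rw [Finset.sum_comm]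
          exact Finset.sum_congr rfl fun a _ => Finset.sum_congr rfl fun b _ => by ring
        · simp [hW, Matrix.conjTranspose_apply, h]
      simp_rw [e2]
      simp
    show ((A * Matrix.of fun a b => M (p,a) (q,b)).trace • B) r s = _
    simp_rw [Matrix.sum_apply, hWM]
    rw [Matrix.smul_apply, smul_eq_mul]
    have hBrs : B r s = ∑ u : Fin n, conj (D u r) * D u s := by
      rw [hD]
      simp [Matrix.mul_apply, Matrix.conjTranspose_apply]
    have htr : (A * Matrix.of fun a b => M (p,a) (q,b)).trace
        = ∑ t : Fin n, ∑ a : Fin n, ∑ b : Fin n, C t a * M (p,a) (q,b) * conj (C t b) := by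
      rw [hC]
      simp only [Matrix.trace, Matrix.diag, Matrix.mul_apply, Matrix.conjTranspose_apply,
        Matrix.of_apply, Finset.sum_mul]
      calc (∑ i : Fin n, ∑ j : Fin n, ∑ t : Fin n,
              star (C t i) * C t j * M (p,j) (q,i))
          = ∑ i : Fin n, ∑ t : Fin n, ∑ j : Fin n,
              star (C t i) * C t j * M (p,j) (q,i) :=
            Finset.sum_congr rfl fun i _ => Finset.sum_comm
        _ = ∑ t : Fin n, ∑ i : Fin n, ∑ j : Fin n,
              star (C t i) * C t j * M (p,j) (q,i) := Finset.sum_comm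
        _ = ∑ t : Fin n, ∑ a : Fin n, ∑ b : Fin n,
              C t a * M (p,a) (q,b) * conj (C t b) := by
            refine Finset.sum_congr rfl fun t _ => ?_
            rw [Finset.sum_comm]
            refine Finset.sum_congr rfl fun a _ => Finset.sum_congr rfl fun b _ => ?_
            rw [starRingEnd_apply]
            ring
    rw [hBrs, htr, Finset.sum_mul_sum]
    exact Finset.sum_congr rfl fun t _ => Finset.sum_congr rfl fun u _ => by ring
  rw [key]
  exact posSemidef_sum _ _ fun t _ => posSemidef_sum _ _ fun u _ =>
    hM.mul_mul_conjTranspose_same _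

lemma posSemidef_real_smul {n : ℕ} {B : Matrix (Fin n) (Fin n) ℂ}
    (hB : B.PosSemidef) {r : ℝ} (hr : 0 ≤ r) : ((r : ℂ) • B).PosSemidef := by
  constructor
  · show ((r : ℂ) • B)ᴴ = _
    rw [Matrix.conjTranspose_smul, hB.1.eq]
    simp
  · intro x
    have h := hB.2 x
    exact (hB.smul (Complex.zero_le_real.mpr hr)).2 x

lemma trace_self_mul_pos {n : ℕ} {A : Matrix (Fin n) (Fin n) ℂ}
    (hA : A.PosSemidef) (hne : A ≠ 0) :
    ∃ r : ℝ, 0 < r ∧ (A * A).trace = (r : ℂ) := by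
  have h1 : (A * A).trace = (Aᴴ * A).trace := by rw [hA.1.eq]
  have h2 : (Aᴴ * A).trace = ∑ i : Fin n, ∑ j : Fin n, (Complex.normSq (A j i) : ℂ) := by
    simp only [Matrix.trace, Matrix.diag, Matrix.mul_apply, Matrix.conjTranspose_apply]
    refine Finset.sum_congr rfl fun i _ => Finset.sum_congr rfl fun j _ => ?_
    rw [Complex.star_def, ← Complex.normSq_eq_conj_mul_self]
  refine ⟨∑ i : Fin n, ∑ j : Fin n, Complex.normSq (A j i), ?_, by push_cast [h1, h2]; norm_num⟩
  have hne' : ∃ j i, A j i ≠ 0 := by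
    by_contra h
    push_neg at h
    exact hne (by ext j i; simpa using h j i)
  obtain ⟨j0, i0, h0⟩ := hne'
  refine Finset.sum_pos' (fun i _ => Finset.sum_nonneg fun j _ => Complex.normSq_nonneg _) ?_
  exact ⟨i0, Finset.mem_univ _, Finset.sum_pos' (fun j _ => Complex.normSq_nonneg _)
    ⟨j0, Finset.mem_univ _, Complex.normSq_pos.mpr h0⟩⟩

/-- Lemma 3.3: interpolation by completely positive maps with orthogonal
inputs. -/
theorem interpolation_completelyPositive_orthogonal
    {n k : ℕ} (A B : Fin k → Matrix (Fin n) (Fin n) ℂ)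
    (hApsd : ∀ i, (A i).PosSemidef) (hAne : ∀ i, A i ≠ 0)
    (horth : ∀ i j, i ≠ j → ((A i)ᴴ * A j).trace = 0)
    (hBpsd : ∀ i, (B i).PosSemidef) :
    (∀ i, (A i).trace = (B i).trace) ↔
      ∃ φ : Matrix (Fin n) (Fin n) ℂ →ₗ[ℂ] Matrix (Fin n) (Fin n) ℂ,
        IsCompletelyPositive (⇑φ) ∧
        (∀ i, φ (A i) = B i) ∧
        ∀ X ∈ Submodule.span ℂ (Set.range A), (φ X).trace = X.trace := by
  constructor
  · intro hTr
    -- the scalars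
    have hc : ∀ i, ∃ r : ℝ, 0 < r ∧ (A i * A i).trace = (r : ℂ) :=
      fun i => trace_self_mul_pos (hApsd i) (hAne i)
    choose r hrpos hrc using hc
    have horth' : ∀ i j, i ≠ j → (A i * A j).trace = 0 := by
      intro i j hij
      have := horth i j hij
      rwa [(hApsd i).1.eq] at this
    -- the map
    set φ : Matrix (Fin n) (Fin n) ℂ →ₗ[ℂ] Matrix (Fin n) (Fin n) ℂ :=
      ∑ i : Fin k, ((r i : ℂ))⁻¹ •
        ((Matrix.traceLinearMap (Fin n) ℂ ℂ ∘ₗ LinearMap.mulLeft ℂ (A i)).smulRight (B i))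
      with hφ
    have hφapp : ∀ X, φ X = ∑ i : Fin k, (A i * X).trace • (((r i : ℂ))⁻¹ • B i) := by
      intro X
      rw [hφ]
      simp only [LinearMap.sum_apply, LinearMap.smul_apply, LinearMap.smulRight_apply,
        LinearMap.comp_apply, LinearMap.mulLeft_apply, Matrix.traceLinearMap_apply]
      exact Finset.sum_congr rfl fun i _ => smul_comm _ _ _
    have hrne : ∀ i, ((r i : ℂ)) ≠ 0 := fun i => by
      exact_mod_cast Complex.ofReal_ne_zero.mpr (ne_of_gt (hrpos i))
    have hφA : ∀ i, φ (A i) = B i := by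
      intro i
      rw [hφapp]
      rw [Finset.sum_eq_single i]
      · rw [hrc i, smul_smul, mul_inv_cancel₀ (hrne i), one_smul]
      · intro j _ hji
        rw [horth' j i hji, zero_smul]
      · intro h; exact absurd (Finset.mem_univ i) h
    refine ⟨φ, ?_, hφA, ?_⟩
    · -- completely positive
      intro m M hM
      have hEq : blockMap m (⇑φ) M
          = ∑ i : Fin k, blockMap m
              (fun X => (A i * X).trace • (((r i : ℂ))⁻¹ • B i)) M := by
        ext ⟨p, s⟩ ⟨q, t⟩
        simp only [blockMap, Matrix.of_apply, Matrix.sum_apply, hφapp]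
      rw [hEq]
      refine posSemidef_sum _ _ fun i _ => ?_
      have hBi : (((r i : ℂ))⁻¹ • B i).PosSemidef := by
        have : ((r i : ℂ))⁻¹ = (((r i)⁻¹ : ℝ) : ℂ) := by push_cast; ring
        rw [this]
        exact posSemidef_real_smul (hBpsd i) (inv_nonneg.mpr (le_of_lt (hrpos i)))
      exact blockMap_traceSmul_posSemidef (hApsd i) hBi m M hM
    · -- trace preservation on the span
      intro X hX
      induction hX using Submodule.span_induction with
      | mem x hx =>
          obtain ⟨i, rfl⟩ := hx
          rw [hφA i, hTr i]
      | zero => simp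
      | add x y hx hy ihx ihy => rw [map_add, Matrix.trace_add, Matrix.trace_add, ihx, ihy]
      | smul a x hx ih => rw [_root_.map_smul, Matrix.trace_smul, Matrix.trace_smul, ih]
  · rintro ⟨φ, _, hφA, hφtr⟩ i
    have hmem : A i ∈ Submodule.span ℂ (Set.range A) :=
      Submodule.subset_span ⟨i, rfl⟩
    rw [← hφtr (A i) hmem, hφA i]
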